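/- Fix nonnegative integers n, l and 1 ≤ m ≤ n−1. Define mult₊^(m)(j) as the number of pairs (L, k) with L = (l₁,…,l_n) ∈ ℤ_{≥0}ⁿ, Σ l_i = l, 0 ≤ k ≤ l_m − 1, and (Σ_{i<m} l_i − Σ_{i>m} l_i) + k = j; define mult₋^(m+1)(j) analogously with m replaced by m+1 and +k replaced by −k, i.e., counting pairs with (Σ_{i<m+1} l_i − Σ_{i>m+1} l_i) − k = j, 0 ≤ k ≤ l_{m+1} − 1. Then mult₊^(m)(j) = mult₋^(m+1)(j) for all integers j. -/

import Mathlib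

section aux

variable {n : ℕ}

lemma upd_sum_key {a b : Fin n} (hab : a ≠ b) (g : Fin n → ℤ) (x y : ℤ) :
    ∑ i, Function.update (Function.update g a x) b y i
      = x + y + ∑ i ∈ Finset.univ \ {a, b}, g i := by
  have ha' : a ∈ Finset.univ \ ({b} : Finset (Fin n)) := by simp [hab]
  rw [Finset.sum_update_of_mem (Finset.mem_univ b), Finset.sum_update_of_mem ha']
  have : (Finset.univ \ {b}) \ {a} = Finset.univ \ ({a, b} : Finset (Fin n)) := by
    ext i; simp; tauto
  rw [this]; ring

lemma upd_cast (L : Fin n → ℕ) (a b : Fin n) (x y : ℕ) (i : Fin n) :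
    ((Function.update (Function.update L a x) b y i : ℕ) : ℤ)
      = Function.update (Function.update (fun i => (L i : ℤ)) a (x : ℤ)) b (y : ℤ) i := by
  by_cases h1 : i = b
  · subst h1; simp
  · by_cases h2 : i = a
    · subst h2; simp [Function.update_of_ne h1]
    · simp [Function.update_of_ne h1, Function.update_of_ne h2]

lemma upd_sum_int (L : Fin n → ℕ) {a b : Fin n} (hab : a ≠ b) (x y : ℕ) :
    (∑ i, (Function.update (Function.update L a x) b y i : ℤ))
      = ∑ i, (L i : ℤ) - L a - L b + x + y := by
  have h1 : (∑ i, (Function.update (Function.update L a x) b y i : ℤ))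
      = (x : ℤ) + y + ∑ i ∈ Finset.univ \ {a, b}, (L i : ℤ) := by
    rw [Finset.sum_congr rfl fun i _ => upd_cast L a b x y i, upd_sum_key hab]
  have h2 : (∑ i, (L i : ℤ)) = (L a : ℤ) + L b + ∑ i ∈ Finset.univ \ {a, b}, (L i : ℤ) := by
    have h := upd_sum_key hab (fun i => (L i : ℤ)) (L a) (L b)
    have he : Function.update (Function.update (fun i => (L i : ℤ)) a ((L a : ℤ))) b ((L b : ℤ))
        = fun i => (L i : ℤ) := by
      rw [show ((L a : ℤ)) = (fun i => (L i : ℤ)) a from rfl, Function.update_eq_self]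
      rw [show ((L b : ℤ)) = (fun i => (L i : ℤ)) b from rfl, Function.update_eq_self]
    rw [he] at h
    exact h
  linarith
end aux

theorem stmt3 (n l : ℕ) (a : Fin n) (ha : (a : ℕ) + 1 < n) (j : ℤ) :
    (((Finset.Nat.antidiagonalTuple n l) ×ˢ Finset.range l).filter
      (fun P : (Fin n → ℕ) × ℕ => P.2 < P.1 a ∧
        (∑ i ∈ Finset.univ.filter (fun i : Fin n => i < a), (P.1 i : ℤ))
          - (∑ i ∈ Finset.univ.filter (fun i : Fin n => a < i), (P.1 i : ℤ))
          + (P.2 : ℤ) = j)).card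
    = (((Finset.Nat.antidiagonalTuple n l) ×ˢ Finset.range l).filter
      (fun P : (Fin n → ℕ) × ℕ => P.2 < P.1 ⟨(a : ℕ) + 1, ha⟩ ∧
        (∑ i ∈ Finset.univ.filter (fun i : Fin n => i < (⟨(a : ℕ) + 1, ha⟩ : Fin n)), (P.1 i : ℤ))
          - (∑ i ∈ Finset.univ.filter (fun i : Fin n => (⟨(a : ℕ) + 1, ha⟩ : Fin n) < i), (P.1 i : ℤ))
          - (P.2 : ℤ) = j)).card := by
  set a' : Fin n := ⟨(a : ℕ) + 1, ha⟩ with ha'def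
  have hab : a ≠ a' := by simp [ha'def, Fin.ext_iff]
  have hval : (a' : ℕ) = (a : ℕ) + 1 := rfl
  clear_value a'
  have hlt : (Finset.univ.filter (fun i : Fin n => i < a'))
      = insert a (Finset.univ.filter (fun i : Fin n => i < a)) := by
    ext i
    simp only [Finset.mem_filter, Finset.mem_univ, true_and, Finset.mem_insert,
      Fin.lt_def, Fin.ext_iff, hval]
    omega
  have hgt : (Finset.univ.filter (fun i : Fin n => a < i))
      = insert a' (Finset.univ.filter (fun i : Fin n => a' < i)) := by
    ext i
    simp only [Finset.mem_filter, Finset.mem_univ, true_and, Finset.mem_insert,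
      Fin.lt_def, Fin.ext_iff, hval]
    omega
  have hanb : a ∉ Finset.univ.filter (fun i : Fin n => i < a) := by simp
  have ha'nb : a' ∉ Finset.univ.filter (fun i : Fin n => i < a) := by
    simp only [Finset.mem_filter, Finset.mem_univ, true_and, Fin.lt_def, hval, not_lt]
    omega
  have hana : a ∉ Finset.univ.filter (fun i : Fin n => a' < i) := by
    simp only [Finset.mem_filter, Finset.mem_univ, true_and, Fin.lt_def, hval, not_lt]
    omega
  have ha'na : a' ∉ Finset.univ.filter (fun i : Fin n => a' < i) := by simp
  have hsum_s : ∀ (L : Fin n → ℕ) (x y : ℕ) (s : Finset (Fin n)), a ∉ s → a' ∉ s →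
      ∑ i ∈ s, (Function.update (Function.update L a x) a' y i : ℤ) = ∑ i ∈ s, (L i : ℤ) := by
    intro L x y s hs hs'
    refine Finset.sum_congr rfl fun i hi => ?_
    have h1 : i ≠ a' := fun h => hs' (h ▸ hi)
    have h2 : i ≠ a := fun h => hs (h ▸ hi)
    simp [Function.update_of_ne h1, Function.update_of_ne h2]
  apply Finset.card_nbij'
    (i := fun P : (Fin n → ℕ) × ℕ =>
      (Function.update (Function.update P.1 a P.2) a' (P.1 a + P.1 a' - P.2), P.1 a'))
    (j := fun Q : (Fin n → ℕ) × ℕ =>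
      (Function.update (Function.update Q.1 a (Q.1 a + Q.1 a' - Q.2)) a' Q.2, Q.1 a))
  · rintro ⟨L, k⟩ hP
    simp only [Finset.mem_coe, Finset.mem_filter, Finset.mem_product, Finset.mem_range,
      Finset.Nat.mem_antidiagonalTuple] at hP ⊢
    obtain ⟨⟨hsumL, hkl⟩, hkLa, heq⟩ := hP
    have hle : L a + L a' ≤ l := by
      rw [← hsumL, ← Finset.sum_pair hab]
      exact Finset.sum_le_sum_of_subset (Finset.subset_univ _)
    have hsumZ : ∑ i, (L i : ℤ) = l := by exact_mod_cast congrArg (Nat.cast : ℕ → ℤ) hsumL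
    refine ⟨⟨?_, ?_⟩, ?_, ?_⟩
    · have h1 := upd_sum_int L hab k (L a + L a' - k)
      have h2 : ((L a + L a' - k : ℕ) : ℤ) = (L a : ℤ) + L a' - k := by
        have : k ≤ L a + L a' := by omega
        push_cast [this]; ring
      have : (↑(∑ i, Function.update (Function.update L a k) a' (L a + L a' - k) i) : ℤ) = (l : ℤ) := by
        push_cast
        rw [h1, h2, hsumZ]; ring
      exact_mod_cast this
    · omega
    · simp only [Function.update_self]
      omega
    · simp only [hlt, Finset.sum_insert hanb]
      rw [hsum_s L k (L a + L a' - k) _ hanb ha'nb,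
          hsum_s L k (L a + L a' - k) _ hana ha'na]
      rw [hgt, Finset.sum_insert ha'na] at heq
      have hva : (Function.update (Function.update L a k) a' (L a + L a' - k) a : ℤ) = k := by
        simp [Function.update_of_ne hab]
      rw [hva]
      linarith
  · rintro ⟨L, k⟩ hP
    simp only [Finset.mem_coe, Finset.mem_filter, Finset.mem_product, Finset.mem_range,
      Finset.Nat.mem_antidiagonalTuple] at hP ⊢
    obtain ⟨⟨hsumL, hkl⟩, hkLa, heq⟩ := hP
    have hle : L a + L a' ≤ l := by
      rw [← hsumL, ← Finset.sum_pair hab]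
      exact Finset.sum_le_sum_of_subset (Finset.subset_univ _)
    have hsumZ : ∑ i, (L i : ℤ) = l := by exact_mod_cast congrArg (Nat.cast : ℕ → ℤ) hsumL
    refine ⟨⟨?_, ?_⟩, ?_, ?_⟩
    · have h1 := upd_sum_int L hab (L a + L a' - k) k
      have h2 : ((L a + L a' - k : ℕ) : ℤ) = (L a : ℤ) + L a' - k := by
        have : k ≤ L a + L a' := by omega
        push_cast [this]; ring
      have : (↑(∑ i, Function.update (Function.update L a (L a + L a' - k)) a' k i) : ℤ) = (l : ℤ) := by
        push_cast
        rw [h1, h2, hsumZ]; ring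
      exact_mod_cast this
    · omega
    · simp only [Function.update_of_ne hab, Function.update_self]
      omega
    · rw [hgt, Finset.sum_insert ha'na,
         hsum_s L (L a + L a' - k) k _ hana ha'na,
         hsum_s L (L a + L a' - k) k _ hanb ha'nb]
      rw [hlt, Finset.sum_insert hanb] at heq
      simp only [Function.update_self]
      linarith
  · rintro ⟨L, k⟩ hP
    simp only [Finset.mem_coe, Finset.mem_filter, Finset.mem_product, Finset.mem_range,
      Finset.Nat.mem_antidiagonalTuple] at hP
    obtain ⟨⟨hsumL, hkl⟩, hkLa, heq⟩ := hP
    have hva : Function.update (Function.update L a k) a' (L a + L a' - k) a = k := by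
      simp [Function.update_of_ne hab]
    have hva' : Function.update (Function.update L a k) a' (L a + L a' - k) a' = L a + L a' - k := by
      simp
    ext i
    · simp only
      by_cases h1 : i = a'
      · subst h1; simp only [Function.update_self, hva, hva']
        try omega
      · by_cases h2 : i = a
        · subst h2
          simp only [Function.update_of_ne hab, Function.update_self, hva, hva']
          try omega
        · simp [Function.update_of_ne h1, Function.update_of_ne h2]
    · simp [hva']
      try omega
  · rintro ⟨L, k⟩ hP
    simp only [Finset.mem_coe, Finset.mem_filter, Finset.mem_product, Finset.mem_range,
      Finset.Nat.mem_antidiagonalTuple] at hP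
    obtain ⟨⟨hsumL, hkl⟩, hkLa, heq⟩ := hP
    have hva : Function.update (Function.update L a (L a + L a' - k)) a' k a = L a + L a' - k := by
      simp [Function.update_of_ne hab]
    have hva' : Function.update (Function.update L a (L a + L a' - k)) a' k a' = k := by
      simp
    ext i
    · simp only
      by_cases h1 : i = a'
      · subst h1; simp only [Function.update_self, hva, hva']
        try omega
      · by_cases h2 : i = a
        · subst h2
          simp only [Function.update_of_ne hab, Function.update_self, hva, hva']
          try omega
        · simp [Function.update_of_ne h1, Function.update_of_ne h2]
    · simp [hva]
      try omega
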